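/- Assume κ₂ ≠ ν (so B ≠ 0). Then the point v₅ (spec-free) with coordinates x₁ = 0, x₂ = ζ/B, yˢ = 0, y₁ = 0, y₂ = ζ(β₁B − β₂ζ)/(B²γ₂), zˢ = 0, z = β₁/α − β₂ζ/(αB) is an equilibrium of F, i.e. F(v₅) = 0. -/
import Mathlib

theorem v₅_spec_free_is_equilibrium
    (α αs β₁ β₂ μ γs γ₁ γ₂ κ₁ κ₂ ν νs ζs ζ : ℝ)
    (hα : 0 < α) (hαs : 0 < αs) (hβ₁pos : 0 < β₁) (hβ₂pos : 0 < β₂)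
    (hμ : 0 < μ) (hγs : 0 < γs) (hγ₁ : 0 < γ₁) (hγ₂ : 0 < γ₂)
    (hκ₁ : 0 < κ₁) (hκ₂ : 0 < κ₂) (hν : 0 < ν) (hνs : 0 < νs)
    (hζs : 0 < ζs) (hζ : 0 < ζ)
    (hκν : κ₂ ≠ ν)
    (B : ℝ) (hB : B = α * (κ₂ - ν))
    (x₁ x₂ ys y₁ y₂ zs z : ℝ)
    (hx₁ : x₁ = 0) (hx₂ : x₂ = ζ / B)
    (hys : ys = 0) (hy₁ : y₁ = 0)
    (hy₂ : y₂ = ζ * (β₁ * B - β₂ * ζ) / (B ^ 2 * γ₂))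
    (hzs : zs = 0) (hz : z = β₁ / α - β₂ * ζ / (α * B)) :
    x₁ * (1 - x₁ - x₂) - α * x₁ * z - αs * x₁ * zs = 0 ∧
    x₂ * (β₁ - β₂ * (x₁ + x₂)) - α * x₂ * z = 0 ∧
    αs * zs * x₁ + μ * y₁ - γs * ys = 0 ∧
    α * z * x₁ - (μ + γ₁) * y₁ = 0 ∧
    α * z * x₂ - γ₂ * y₂ = 0 ∧
    γs * ys - νs * αs * zs * x₁ - ζs * zs = 0 ∧
    κ₁ * γ₁ * y₁ + κ₂ * γ₂ * y₂ - ν * α * z * (x₁ + x₂) - ζ * z = 0 := by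
  have hBne : B ≠ 0 := by
    rw [hB]
    exact mul_ne_zero hα.ne' (sub_ne_zero.mpr hκν)
  subst hx₁ hx₂ hys hy₁ hy₂ hzs hz
  refine ⟨by ring, ?_, by ring, by ring, ?_, by ring, ?_⟩
  · field_simp
    ring
  · field_simp
    ring
  · field_simp
    rw [hB]
    ring
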